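/- For every h ∈ {2,3,4,…} ∪ {∞} there exists a functor T_h : I → Ab (taking C = I and s = id_I) such that ht_I(T_h) = 1 but ht_⊕(T_h) = h. In particular, the inequality ht_I(T) ≤ ht_⊕(T) may be strict. -/

import Mathlib

open CategoryTheory CategoryTheory.Limits

/-- The category `𝓘`: objects are the non-negative integers, and a morphism `m ⟶ n`
is a subset of `{0, …, min m n − 1}` (the 0-based incarnation of `{1, …, min(m,n)}`),
thought of as the partial identity defined on that subset.  Composition is given by
intersection, and the identity of `n` is the full subset. -/
abbrev Icat : Type := ℕ

instance : Category Icat where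
  Hom m n := {S : Finset ℕ // S ⊆ Finset.range (min m n)}
  id n := ⟨Finset.range n, by simp⟩
  comp {m n k} f g := ⟨f.1 ∩ g.1, by
    intro i hi
    rw [Finset.mem_inter] at hi
    have h1 := f.2 hi.1
    have h2 := g.2 hi.2
    rw [Finset.mem_range] at h1 h2 ⊢
    omega⟩
  id_comp {m n} f := by
    apply Subtype.ext
    dsimp
    rw [Finset.inter_eq_right]
    intro i hi
    have := f.2 hi
    rw [Finset.mem_range] at this ⊢
    omega
  comp_id {m n} f := by
    apply Subtype.ext
    dsimp
    rw [Finset.inter_eq_left]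
    intro i hi
    have := f.2 hi
    rw [Finset.mem_range] at this ⊢
    omega
  assoc f g h := by
    apply Subtype.ext
    exact Finset.inter_assoc _ _ _

/-- The endomorphism of `m` in `𝓘` given by the partial identity defined on the
subset `R` (intersected with the ambient set `{0, …, m−1}`). -/
def pId (m : ℕ) (R : Finset ℕ) : (m : Icat) ⟶ (m : Icat) :=
  ⟨R ∩ Finset.range m, by
    intro i hi
    rw [Finset.mem_inter] at hi
    simpa [Nat.min_self] using hi.2⟩
universe v u w z

variable {C : Type u} [Category.{v} C] {A : Type w} [Category.{z} A] [Abelian A]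

/-- The `i`-th block `{i}_λ` of an ordered shifted partition `λ = (lam 0, …, lam n)`,
in 0-based coordinates: `{λ_0 + ⋯ + λ_{i−1}, …, λ_0 + ⋯ + λ_i − 1}`. -/
def blkOf (lam : ℕ → ℕ) (i : ℕ) : Finset ℕ :=
  Finset.Ico (∑ j ∈ Finset.range i, lam j) (∑ j ∈ Finset.range (i + 1), lam j)

/-- The alternating sum `Σ_{S ⊆ n̲} (−1)^{|S|} T(s((n̲ ∖ S)_λ))`, an endomorphism of
`T(s(m))`, whose image is the cross-effect `cr_λ(T)`.  Here `λ` is an ordered shifted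
partition of `m` of length `n`, and a subset of `m̲` is regarded as the corresponding
partial-identity endomorphism of `m` in `𝓘`. -/
noncomputable def crMap (s : Icat ⥤ C) (T : C ⥤ A) (n m : ℕ) (lam : ℕ → ℕ) :
    T.obj (s.obj m) ⟶ T.obj (s.obj m) :=
  ∑ S ∈ (Finset.Icc 1 n).powerset,
    ((-1 : ℤ) ^ S.card) •
      T.map (s.map (pId m (((Finset.Icc 1 n) \ S).biUnion (blkOf lam))))

/-- `HtOplusLE s T k` says that `ht_⊕(T) ≤ k − 1`: the cross-effect `cr_λ(T)` vanishes
for every ordered shifted partition `λ ⊢ m` with `λ_0 = 0` of length `n > k − 1`. -/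
def HtOplusLE (s : Icat ⥤ C) (T : C ⥤ A) (k : ℕ) : Prop :=
  ∀ (n m : ℕ) (lam : ℕ → ℕ), (∑ i ∈ Finset.range (n + 1), lam i = m) → lam 0 = 0 →
    k ≤ n → IsZero (Limits.image (crMap s T n m lam))

/-- `HtILE s T k` says that `ht_𝓘(T) ≤ k − 1`: the cross-effect `cr_λ(T)` vanishes for
every ordered shifted partition `λ ⊢ m` with `λ_1 = ⋯ = λ_n = 1` of length `n > k − 1`. -/
def HtILE (s : Icat ⥤ C) (T : C ⥤ A) (k : ℕ) : Prop :=
  ∀ (n m : ℕ) (lam : ℕ → ℕ), (∑ i ∈ Finset.range (n + 1), lam i = m) →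
    (∀ i, 1 ≤ i → i ≤ n → lam i = 1) →
    k ≤ n → IsZero (Limits.image (crMap s T n m lam))

/-- The height `ht_⊕(T)`.  Heights take values in `{-1, 0, 1, …, ∞}`; we encode such a
value `h` as `h + 1 : ℕ∞` (so `-1 ↦ 0`, `∞ ↦ ⊤`), an order isomorphism, so inequalities
and equalities of heights are faithfully represented. -/
noncomputable def htOplus (s : Icat ⥤ C) (T : C ⥤ A) : ℕ∞ :=
  sInf {e : ℕ∞ | ∃ k : ℕ, e = (k : ℕ∞) ∧ HtOplusLE s T k}

/-- The height `ht_𝓘(T)` (shifted by one, as for `htOplus`). -/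
noncomputable def htI (s : Icat ⥤ C) (T : C ⥤ A) : ℕ∞ :=
  sInf {e : ℕ∞ | ∃ k : ℕ, e = (k : ℕ∞) ∧ HtILE s T k}

namespace Strict14

open Finset

universe r

/-- Allowed sets: size at most `h` (as `ℕ∞`) and not an interval of size `≥ 2`. -/
def Allow (h : ℕ∞) (S : Finset ℕ) : Prop :=
  (S.card : ℕ∞) ≤ h ∧ ∀ a b : ℕ, a + 2 ≤ b → S ≠ Finset.Ico a b

def Bas (h : ℕ∞) (m : ℕ) : Type r :=
  ULift.{r} {S : Finset ℕ // S ⊆ Finset.range m ∧ Allow h S}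

abbrev TG (h : ℕ∞) (m : ℕ) : Type r := Bas.{r} h m →₀ ℤ

noncomputable def bmap {h : ℕ∞} {m n : Icat} (f : m ⟶ n) (b : Bas.{r} h m) : TG.{r} h n :=
  if hb : b.down.1 ⊆ f.1 then
    Finsupp.single (ULift.up ⟨b.down.1, ⟨fun x hx => by
      have := f.2 (hb hx)
      rw [Finset.mem_range] at this ⊢
      omega, b.down.2.2⟩⟩) 1
  else 0

noncomputable def Tmap {h : ℕ∞} {m n : Icat} (f : m ⟶ n) : TG.{r} h m →+ TG.{r} h n :=
  ((Finsupp.lift (TG.{r} h n) ℤ (Bas.{r} h m)) (bmap f)).toAddMonoidHom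

lemma Tmap_single {h : ℕ∞} {m n : Icat} (f : m ⟶ n) (b : Bas.{r} h m) (z : ℤ) :
    Tmap (h := h) f (Finsupp.single b z) = z • bmap f b := by
  simp [Tmap]

lemma bmap_self {h : ℕ∞} {m : Icat} (f : m ⟶ m) (b : Bas.{r} h m) :
    bmap (h := h) f b = if b.down.1 ⊆ f.1 then Finsupp.single b 1 else 0 := by
  classical
  obtain ⟨⟨S, hS⟩⟩ := b
  unfold bmap
  split_ifs with hb
  · rfl
  · rfl

lemma comp_fst {m n k : Icat} (f : m ⟶ n) (g : n ⟶ k) : (f ≫ g).1 = f.1 ∩ g.1 := rfl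

lemma id_fst (n : Icat) : (𝟙 n : n ⟶ n).1 = Finset.range n := rfl

lemma Tmap_bmap {h : ℕ∞} {m n k : Icat} (f : m ⟶ n) (g : n ⟶ k) (b : Bas.{r} h m) :
    Tmap (h := h) g (bmap f b) = bmap (f ≫ g) b := by
  classical
  rw [bmap]
  split_ifs with hb
  · erw [Tmap_single]
    unfold bmap
    by_cases hg : b.down.1 ⊆ g.1
    · rw [dif_pos hg, dif_pos (by rw [comp_fst]; exact Finset.subset_inter hb hg)]
      simp
    · rw [dif_neg hg, dif_neg (by
        rw [comp_fst]
        intro hc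
        exact hg fun x hx => (Finset.mem_inter.1 (hc hx)).2)]
      simp
  · rw [map_zero, bmap, dif_neg]
    intro hc
    exact hb fun x hx => (Finset.mem_inter.1 ((comp_fst f g ▸ hc) hx)).1

noncomputable def Th (h : ℕ∞) : Icat ⥤ AddCommGrpCat.{r} where
  obj m := AddCommGrpCat.of (TG.{r} h m)
  map f := AddCommGrpCat.ofHom (Tmap f)
  map_id n := by
    refine AddCommGrpCat.hom_ext <| Finsupp.addHom_ext fun b z => ?_
    show Tmap (𝟙 n) (Finsupp.single b z) = Finsupp.single b z
    rw [Tmap_single, bmap_self, id_fst, if_pos b.down.2.1]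
    simp
  map_comp {m n k} f g := by
    refine AddCommGrpCat.hom_ext <| Finsupp.addHom_ext fun b z => ?_
    show Tmap (f ≫ g) (Finsupp.single b z) = Tmap g (Tmap f (Finsupp.single b z))
    rw [Tmap_single, Tmap_single, map_zsmul, Tmap_bmap]

end Strict14
namespace Strict14

open Finset

def Good (n : ℕ) (lam : ℕ → ℕ) (W : Finset ℕ) : Prop :=
  W ⊆ (Finset.Icc 1 n).biUnion (blkOf lam) ∧
    ∀ i ∈ Finset.Icc 1 n, (W ∩ blkOf lam i).Nonempty

lemma blkOf_disjoint (lam : ℕ → ℕ) {i j : ℕ} (hij : i ≠ j) :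
    Disjoint (blkOf lam i) (blkOf lam j) := by
  wlog hlt : i < j generalizing i j
  · exact (this hij.symm (by omega)).symm
  have hle : (∑ k ∈ Finset.range (i+1), lam k) ≤ ∑ k ∈ Finset.range j, lam k :=
    Finset.sum_le_sum_of_subset (Finset.range_subset_range.2 (by omega))
  rw [Finset.disjoint_left]
  intro a ha hb
  rw [blkOf, Finset.mem_Ico] at ha hb
  omega

lemma subset_char (n : ℕ) (lam : ℕ → ℕ) (W : Finset ℕ) {S : Finset ℕ}
    (hS : S ⊆ Finset.Icc 1 n) :
    W ⊆ ((Finset.Icc 1 n) \ S).biUnion (blkOf lam) ↔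
      (W ⊆ (Finset.Icc 1 n).biUnion (blkOf lam) ∧ ∀ i ∈ S, W ∩ blkOf lam i = ∅) := by
  constructor
  · intro hw
    refine ⟨hw.trans (Finset.biUnion_subset_biUnion_of_subset_left _ Finset.sdiff_subset), ?_⟩
    intro i hi
    by_contra hne
    obtain ⟨x, hx⟩ := Finset.nonempty_iff_ne_empty.2 hne
    rw [Finset.mem_inter] at hx
    obtain ⟨j, hj, hxj⟩ := Finset.mem_biUnion.1 (hw hx.1)
    rw [Finset.mem_sdiff] at hj
    rcases eq_or_ne i j with rfl | hij
    · exact hj.2 hi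
    · exact (Finset.disjoint_left.1 (blkOf_disjoint lam hij)) hx.2 hxj
  · rintro ⟨hfull, hempty⟩ x hx
    obtain ⟨j, hj, hxj⟩ := Finset.mem_biUnion.1 (hfull hx)
    refine Finset.mem_biUnion.2 ⟨j, Finset.mem_sdiff.2 ⟨hj, fun hjS => ?_⟩, hxj⟩
    have := hempty j hjS
    exact absurd (Finset.mem_inter.2 ⟨hx, hxj⟩) (by simp [this])

open scoped Classical in
lemma coeff_eq (n : ℕ) (lam : ℕ → ℕ) (W : Finset ℕ) :
    (∑ S ∈ (Finset.Icc 1 n).powerset,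
      if W ⊆ ((Finset.Icc 1 n) \ S).biUnion (blkOf lam) then ((-1:ℤ)^S.card) else 0)
      = if Good n lam W then 1 else 0 := by
  by_cases hfull : W ⊆ (Finset.Icc 1 n).biUnion (blkOf lam)
  · set D := (Finset.Icc 1 n).filter (fun i => W ∩ blkOf lam i = ∅) with hD
    have hterm : ∀ S ∈ (Finset.Icc 1 n).powerset,
        (if W ⊆ ((Finset.Icc 1 n) \ S).biUnion (blkOf lam) then ((-1:ℤ)^S.card) else 0)
          = if S ∈ D.powerset then ((-1:ℤ)^S.card) else 0 := by
      intro S hS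
      rw [Finset.mem_powerset] at hS
      have hiff : (W ⊆ ((Finset.Icc 1 n) \ S).biUnion (blkOf lam)) ↔ S ∈ D.powerset := by
        rw [subset_char n lam W hS, Finset.mem_powerset]
        constructor
        · rintro ⟨-, he⟩ i hi
          exact Finset.mem_filter.2 ⟨hS hi, he i hi⟩
        · intro hsub
          exact ⟨hfull, fun i hi => (Finset.mem_filter.1 (hsub hi)).2⟩
      rw [if_congr hiff rfl rfl]
    rw [Finset.sum_congr rfl hterm, Finset.sum_ite_mem,
        Finset.inter_eq_right.2 (Finset.powerset_mono.2 (Finset.filter_subset _ _)),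
        Finset.sum_powerset_neg_one_pow_card]
    have hDe : D = ∅ ↔ Good n lam W := by
      rw [Finset.filter_eq_empty_iff]
      constructor
      · intro hd
        exact ⟨hfull, fun i hi => Finset.nonempty_iff_ne_empty.2 (hd hi)⟩
      · intro hg i hi
        exact Finset.nonempty_iff_ne_empty.1 (hg.2 i hi)
    rw [if_congr hDe rfl rfl]
  · rw [if_neg (fun hg => hfull hg.1), Finset.sum_eq_zero]
    intro S hS
    rw [Finset.mem_powerset] at hS
    rw [if_neg]
    intro hc
    exact hfull ((subset_char n lam W hS).1 hc).1

end Strict14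
namespace Strict14

open Finset

lemma hom_sum_apply {α : Type*} {X Y : AddCommGrpCat} (s : Finset α) (f : α → (X ⟶ Y)) (x : X) :
    (∑ i ∈ s, f i) x = ∑ i ∈ s, f i x := by
  classical
  induction s using Finset.induction with
  | empty =>
    rw [Finset.sum_empty, Finset.sum_empty]
    rfl
  | insert _ _ hnotmem ih =>
    rw [Finset.sum_insert hnotmem, Finset.sum_insert hnotmem, AddCommGrpCat.hom_add_apply, ih]

lemma isZero_image_iff {X Y : AddCommGrpCat} (f : X ⟶ Y) :
    IsZero (Limits.image f) ↔ f = 0 := by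
  constructor
  · intro hz
    have h0 : Limits.image.ι f = 0 := hz.eq_zero_of_src _
    rw [← Limits.image.fac f, h0, Limits.comp_zero]
  · rintro rfl
    exact (Limits.isZero_zero _).of_iso Limits.imageZero

open scoped Classical in
lemma crMap_single (h : ℕ∞) (n m : ℕ) (lam : ℕ → ℕ) (b : Bas.{r} h m) :
    (crMap (𝟭 Icat) (Th.{r} h) n m lam) (Finsupp.single b 1)
      = if Good n lam b.down.1 then Finsupp.single b 1 else 0 := by
  have happ : (crMap (𝟭 Icat) (Th.{r} h) n m lam) (Finsupp.single b 1)
      = ∑ S ∈ (Finset.Icc 1 n).powerset,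
          ((-1:ℤ)^S.card) •
            (Tmap (h := h) (pId m (((Finset.Icc 1 n) \ S).biUnion (blkOf lam)))
              (Finsupp.single b 1)) := by
    rw [crMap]
    refine (hom_sum_apply _ _ _).trans ?_
    rfl
  rw [happ]
  have hterm : ∀ S ∈ (Finset.Icc 1 n).powerset,
      ((-1:ℤ)^S.card) •
          (Tmap (h := h) (pId m (((Finset.Icc 1 n) \ S).biUnion (blkOf lam)))
            (Finsupp.single b 1))
        = (if b.down.1 ⊆ ((Finset.Icc 1 n) \ S).biUnion (blkOf lam) then ((-1:ℤ)^S.card) else 0)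
            • (Finsupp.single b 1 : TG h m) := by
    intro S _
    rw [Tmap_single, bmap_self]
    have hsub : (b.down.1 ⊆ (pId m (((Finset.Icc 1 n) \ S).biUnion (blkOf lam))).1)
        ↔ b.down.1 ⊆ ((Finset.Icc 1 n) \ S).biUnion (blkOf lam) := by
      constructor
      · intro hc
        exact fun x hx => (Finset.mem_inter.1 (hc hx)).1
      · intro hc
        exact fun x hx => Finset.mem_inter.2 ⟨hc hx, b.down.2.1 hx⟩
    rw [if_congr hsub rfl rfl]
    split_ifs with hc
    · simp
    · simp
  rw [Finset.sum_congr rfl hterm, ← Finset.sum_smul, coeff_eq]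
  split_ifs with hg
  · simp
    rfl
  · simp
    rfl

lemma crMap_eq_zero (h : ℕ∞) (n m : ℕ) (lam : ℕ → ℕ)
    (hno : ∀ b : Bas.{r} h m, ¬ Good n lam b.down.1) :
    crMap (𝟭 Icat) (Th.{r} h) n m lam = 0 := by
  refine AddCommGrpCat.hom_ext <| Finsupp.addHom_ext fun b z => ?_
  show (crMap (𝟭 Icat) (Th.{r} h) n m lam) (Finsupp.single b z) = 0
  have : (Finsupp.single b z : TG h m) = z • Finsupp.single b 1 := by
    simp
  rw [this]
  erw [map_zsmul, crMap_single]
  rw [if_neg (hno b)]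
  exact smul_zero (A := TG h m) z

lemma crMap_ne_zero (h : ℕ∞) (n m : ℕ) (lam : ℕ → ℕ) (b : Bas.{r} h m)
    (hb : Good n lam b.down.1) :
    crMap (𝟭 Icat) (Th.{r} h) n m lam ≠ 0 := by
  intro h0
  have := crMap_single h n m lam b
  rw [h0, if_pos hb] at this
  have hz : ((0 : (Th.{r} h).obj ((𝟭 Icat).obj m) ⟶ (Th.{r} h).obj ((𝟭 Icat).obj m)))
      (Finsupp.single b 1) = (0 : TG h m) := rfl
  rw [hz] at this
  exact one_ne_zero (Finsupp.single_eq_zero.1 this.symm)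

end Strict14
namespace Strict14

open Finset

lemma HtILE_mono {s : Icat ⥤ C} {T : C ⥤ A} {k k' : ℕ} (hkk : k ≤ k')
    (H : HtILE s T k) : HtILE s T k' :=
  fun n m lam h1 h2 h3 => H n m lam h1 h2 (hkk.trans h3)

lemma HtOplusLE_mono {s : Icat ⥤ C} {T : C ⥤ A} {k k' : ℕ} (hkk : k ≤ k')
    (H : HtOplusLE s T k) : HtOplusLE s T k' :=
  fun n m lam h1 h2 h3 => H n m lam h1 h2 (hkk.trans h3)

lemma htILE_two (h : ℕ∞) : HtILE (𝟭 Icat) (Th.{r} h) 2 := by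
  intro n m lam hsum hone h2n
  rw [isZero_image_iff]
  apply crMap_eq_zero
  rintro b ⟨hsub, hmeet⟩
  have hps : ∀ i ≤ n, (∑ j ∈ Finset.range (i+1), lam j) = lam 0 + i := by
    intro i hi
    induction i with
    | zero => simp
    | succ p ih =>
      rw [Finset.sum_range_succ, ih (by omega), hone (p+1) (by omega) (by omega)]
      omega
  have hblk : ∀ i, 1 ≤ i → i ≤ n → blkOf lam i = {lam 0 + i - 1} := by
    intro i h1 h2
    have ha := hps (i-1) (by omega)
    have hb := hps i h2
    have hii : i - 1 + 1 = i := by omega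
    rw [hii] at ha
    rw [blkOf, ha, hb]
    ext x
    rw [Finset.mem_Ico, Finset.mem_singleton]
    omega
  have hbe : b.down.1 = Finset.Ico (lam 0) (lam 0 + n) := by
    apply Finset.Subset.antisymm
    · intro x hx
      obtain ⟨i, hi, hxi⟩ := Finset.mem_biUnion.1 (hsub hx)
      rw [Finset.mem_Icc] at hi
      rw [hblk i hi.1 hi.2, Finset.mem_singleton] at hxi
      rw [Finset.mem_Ico]
      omega
    · intro x hx
      rw [Finset.mem_Ico] at hx
      obtain ⟨y, hy⟩ := hmeet (x - lam 0 + 1) (Finset.mem_Icc.2 ⟨by omega, by omega⟩)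
      rw [Finset.mem_inter, hblk (x - lam 0 + 1) (by omega) (by omega),
        Finset.mem_singleton] at hy
      have : y = x := by omega
      rw [← this]
      exact hy.1
  exact b.down.2.2.2 (lam 0) (lam 0 + n) (by omega) hbe

lemma not_htILE_one (h : ℕ∞) (hh : 2 ≤ h) : ¬ HtILE (𝟭 Icat) (Th.{r} h) 1 := by
  intro H
  have hz := H 1 1 (fun i => if i = 0 then 0 else 1) (by decide)
    (fun i h1 h2 => by
      have : i = 1 := by omega
      rw [this]
      rfl) le_rfl
  rw [isZero_image_iff] at hz
  have hallow : Allow h {0} := by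
    constructor
    · show ((Finset.card {0} : ℕ) : ℕ∞) ≤ h
      rw [Finset.card_singleton]
      exact le_trans (by norm_num) hh
    · intro a c hac heq
      have : (Finset.Ico a c).card = 1 := by rw [← heq]; rfl
      rw [Nat.card_Ico] at this
      omega
  exact crMap_ne_zero h 1 1 (fun i => if i = 0 then 0 else 1)
    (ULift.up ⟨{0}, by decide, hallow⟩)
    (show Good 1 (fun i => if i = 0 then 0 else 1) {0} from ⟨by decide, by decide⟩) hz

lemma not_htOplusLE (h : ℕ∞) (k : ℕ) (hk2 : 2 ≤ k) (hkh : (k : ℕ∞) ≤ h) :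
    ¬ HtOplusLE (𝟭 Icat) (Th.{r} h) k := by
  intro H
  set lam : ℕ → ℕ := fun i => if i = 0 then 0 else if i = 1 then 2 else 1 with hlam
  have hps : ∀ i, 1 ≤ i → (∑ j ∈ Finset.range (i+1), lam j) = i + 1 := by
    intro i hi
    induction i with
    | zero => omega
    | succ p ih =>
      rcases Nat.lt_or_ge p 1 with h1 | h1
      · have : p = 0 := by omega
        subst this
        simp [hlam, Finset.sum_range_succ]
      · rw [Finset.sum_range_succ, ih h1]
        have hl : lam (p+1) = 1 := by
          rw [hlam]
          show (if p + 1 = 0 then 0 else if p + 1 = 1 then 2 else 1) = 1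
          rw [if_neg (by omega), if_neg (by omega)]
        rw [hl]
  have hsum : ∑ i ∈ Finset.range (k+1), lam i = k + 1 := hps k (by omega)
  have hz := H k (k+1) lam hsum rfl le_rfl
  rw [isZero_image_iff] at hz
  have h0W : (0 : ℕ) ∈ insert 0 (Finset.Ico 2 (k+1)) := Finset.mem_insert_self _ _
  have h1W : (1 : ℕ) ∉ insert 0 (Finset.Ico 2 (k+1)) := by
    rw [Finset.mem_insert, Finset.mem_Ico]
    omega
  have hblk1 : blkOf lam 1 = Finset.Ico 0 2 := by
    have h2 := hps 1 le_rfl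
    rw [blkOf, show (∑ j ∈ Finset.range 1, lam j) = 0 by simp [hlam], h2]
  have hblki : ∀ i, 2 ≤ i → blkOf lam i = {i} := by
    intro i hi
    have ha := hps (i-1) (by omega)
    have hb := hps i (by omega)
    have hii : i - 1 + 1 = i := by omega
    rw [hii] at ha
    rw [blkOf, ha, hb]
    ext x
    rw [Finset.mem_Ico, Finset.mem_singleton]
    omega
  have hWsub : insert 0 (Finset.Ico 2 (k+1)) ⊆ Finset.range (k+1) := by
    intro x hx
    rw [Finset.mem_insert, Finset.mem_Ico] at hx
    rw [Finset.mem_range]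
    omega
  have hWallow : Allow h (insert 0 (Finset.Ico 2 (k+1))) := by
    have hcard : (insert 0 (Finset.Ico 2 (k+1))).card = k := by
      rw [Finset.card_insert_of_notMem (by rw [Finset.mem_Ico]; omega), Nat.card_Ico]
      omega
    constructor
    · show (((insert 0 (Finset.Ico 2 (k+1))).card : ℕ) : ℕ∞) ≤ h
      rw [hcard]
      exact hkh
    · intro a c hac heq
      have ha0 : a = 0 := by
        have := h0W
        rw [heq, Finset.mem_Ico] at this
        omega
      refine h1W ?_
      rw [heq, Finset.mem_Ico]
      omega
  have hGood : Good k lam (insert 0 (Finset.Ico 2 (k+1))) := by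
    constructor
    · intro x hx
      rw [Finset.mem_insert, Finset.mem_Ico] at hx
      rw [Finset.mem_biUnion]
      rcases hx with rfl | hx
      · refine ⟨1, Finset.mem_Icc.2 ⟨le_rfl, by omega⟩, ?_⟩
        rw [hblk1]
        decide
      · refine ⟨x, Finset.mem_Icc.2 ⟨by omega, by omega⟩, ?_⟩
        rw [hblki x hx.1]
        exact Finset.mem_singleton_self x
    · intro i hi
      rw [Finset.mem_Icc] at hi
      rcases Nat.lt_or_ge i 2 with h1 | h1
      · have : i = 1 := by omega
        subst this
        refine ⟨0, Finset.mem_inter.2 ⟨h0W, ?_⟩⟩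
        rw [hblk1]
        decide
      · refine ⟨i, Finset.mem_inter.2 ⟨?_, ?_⟩⟩
        · rw [Finset.mem_insert, Finset.mem_Ico]
          omega
        · rw [hblki i h1]
          exact Finset.mem_singleton_self i
  exact crMap_ne_zero h k (k+1) lam
    (ULift.up ⟨insert 0 (Finset.Ico 2 (k+1)), hWsub, hWallow⟩) hGood hz

lemma htOplusLE_succ (H : ℕ) (h : ℕ∞) (hHh : h ≤ (H : ℕ∞)) :
    HtOplusLE (𝟭 Icat) (Th.{r} h) (H + 1) := by
  intro n m lam hsum hzero hkn
  rw [isZero_image_iff]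
  apply crMap_eq_zero
  rintro b ⟨hsub, hmeet⟩
  classical
  have key : ∀ i ∈ Finset.Icc 1 n,
      (if hi : i ∈ Finset.Icc 1 n then (hmeet i hi).choose else 0)
        ∈ b.down.1 ∩ blkOf lam i := by
    intro i hi
    rw [dif_pos hi]
    exact (hmeet i hi).choose_spec
  have hcard : (Finset.Icc 1 n).card ≤ b.down.1.card := by
    apply Finset.card_le_card_of_injOn
      (fun i => if hi : i ∈ Finset.Icc 1 n then (hmeet i hi).choose else 0)
    · intro i hi
      exact (Finset.mem_inter.1 (key i hi)).1
    · intro i hi j hj hgij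
      by_contra hne
      have ki := (Finset.mem_inter.1 (key i (Finset.mem_coe.1 hi))).2
      have kj := (Finset.mem_inter.1 (key j (Finset.mem_coe.1 hj))).2
      have heq : (if hi' : i ∈ Finset.Icc 1 n then (hmeet i hi').choose else 0)
          = (if hj' : j ∈ Finset.Icc 1 n then (hmeet j hj').choose else 0) := hgij
      rw [heq] at ki
      exact (Finset.disjoint_left.1 (blkOf_disjoint lam hne)) ki kj
  rw [Nat.card_Icc] at hcard
  have hble : (b.down.1.card : ℕ∞) ≤ (H : ℕ∞) := le_trans b.down.2.2.1 hHh
  rw [Nat.cast_le] at hble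
  omega

lemma htI_eq (h : ℕ∞) (hh : 2 ≤ h) : htI (𝟭 Icat) (Th.{r} h) = 2 := by
  rw [htI]
  apply le_antisymm
  · exact sInf_le ⟨2, by norm_num, htILE_two h⟩
  · refine le_sInf ?_
    rintro e ⟨k, rfl, hk⟩
    by_contra hlt
    push_neg at hlt
    have hk2 : k < 2 := by exact_mod_cast hlt
    exact not_htILE_one h hh (HtILE_mono (by omega) hk)

lemma htOplus_eq (h : ℕ∞) (hh : 2 ≤ h) : htOplus (𝟭 Icat) (Th.{r} h) = h + 1 := by
  rw [htOplus]
  induction h with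
  | top =>
    have hempty : {e : ℕ∞ | ∃ k : ℕ, e = (k : ℕ∞) ∧ HtOplusLE (𝟭 Icat) (Th.{r} ⊤) k} = ∅ := by
      rw [Set.eq_empty_iff_forall_notMem]
      rintro e ⟨k, rfl, hk⟩
      exact not_htOplusLE ⊤ (max k 2) (le_max_right _ _) le_top
        (HtOplusLE_mono (le_max_left _ _) hk)
    rw [hempty, sInf_empty]
    rfl
  | coe H =>
    have hH2 : 2 ≤ H := by exact_mod_cast hh
    apply le_antisymm
    · refine sInf_le ⟨H + 1, by push_cast; ring, htOplusLE_succ H _ le_rfl⟩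
    · refine le_sInf ?_
      rintro e ⟨k, rfl, hk⟩
      by_contra hlt
      push_neg at hlt
      have hkH : k ≤ H := by
        have h2 : (k : ℕ∞) < ((H + 1 : ℕ) : ℕ∞) := by
          rw [show ((H + 1 : ℕ) : ℕ∞) = (H : ℕ∞) + 1 by push_cast; ring]
          exact hlt
        rw [Nat.cast_lt] at h2
        omega
      exact not_htOplusLE (H : ℕ∞) H hH2 le_rfl (HtOplusLE_mono hkH hk)

end Strict14
/-- Statement 14: for every `h ∈ {2, 3, …} ∪ {∞}` there is a functor `T_h : 𝓘 ⥤ Ab`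
(taking `C = 𝓘` and `s = 𝟭 𝓘`) with `ht_𝓘(T_h) = 1` but `ht_⊕(T_h) = h`; in particular
the inequality `ht_𝓘 ≤ ht_⊕` may be strict.  (Recall that heights are encoded with a
shift by one, so `ht_𝓘(T_h) = 1` reads `htI _ T_h = 2` and `ht_⊕(T_h) = h` reads
`htOplus _ T_h = h + 1`, with `⊤ + 1 = ⊤`.) -/
theorem exists_htI_lt_htOplus (h : ℕ∞) (hh : 2 ≤ h) :
    ∃ T : Icat ⥤ AddCommGrpCat, htI (𝟭 Icat) T = 2 ∧ htOplus (𝟭 Icat) T = h + 1 := by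
  exact ⟨Strict14.Th h, Strict14.htI_eq h hh, Strict14.htOplus_eq h hh⟩
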